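/- Let n ≥ 2, τ > 0, K > 0, let v̂' ∈ ℝ^{n−1} be a unit vector, and set ξ = iτ(v̂', 0) − τe_n ∈ ℂⁿ. Then the function E_ξ(x) = exp(iτ v̂'·x' − τx_n) is Lebesgue integrable on the paraboloid region P = { x = (x', x_n) ∈ ℝⁿ : x_n > K|x'|² }, and ∫_P E_ξ(x) dx = τ^{−1} (π/(τK))^{(n−1)/2} exp(−τ/(4K)). -/

import Mathlib

open MeasureTheory Set Real Filter

/-- For `n ≥ 2`, `τ > 0`, `K > 0` and a unit vector `v̂' ∈ ℝ^{n−1}`,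
with `ξ = iτ(v̂',0) − τe_n`, the function `E_ξ(x) = exp(iτ v̂'·x' − τ x_n)` is Lebesgue
integrable on the paraboloid region `P = {x : x_n > K|x'|²}` and
`∫_P E_ξ = τ⁻¹ (π/(τK))^{(n−1)/2} exp(−τ/(4K))`.  Here `ℝⁿ ∋ x = (x', x_n)` is modelled
as `EuclideanSpace ℝ (Fin (n-1)) × ℝ` with the (product) Lebesgue measure. -/

lemma exp_Ioi_int {τ : ℝ} (hτ : 0 < τ) (a : ℝ) :
    ∫ t in Ioi a, Real.exp (-τ * t) = Real.exp (-τ * a) / τ := by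
  have hderiv : ∀ t ∈ Ioi a, HasDerivAt (fun t => -(Real.exp (-τ * t) / τ))
      (Real.exp (-τ * t)) t := by
    intro t _
    have h1 : HasDerivAt (fun t : ℝ => -τ * t) (-τ) t := by
      simpa using (hasDerivAt_id t).const_mul (-τ)
    have h2 := (Real.hasDerivAt_exp (-τ * t)).comp t h1
    have h3 := (h2.div_const τ).neg
    have h4 : HasDerivAt (fun t => -(Real.exp (-τ * t) / τ)) (-(Real.exp (-τ * t) * -τ / τ)) t := h3
    convert h4 using 1
    field_simp
  have hcont : ContinuousWithinAt (fun t => -(Real.exp (-τ * t) / τ)) (Ici a) a :=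
    Continuous.continuousWithinAt (by continuity)
  have htend : Tendsto (fun t => -(Real.exp (-τ * t) / τ)) atTop (nhds 0) := by
    have h1 : Tendsto (fun t : ℝ => τ * t) atTop atTop :=
      Tendsto.const_mul_atTop hτ tendsto_id
    have h2 : Tendsto (fun t : ℝ => Real.exp (-(τ * t))) atTop (nhds 0) :=
      Real.tendsto_exp_neg_atTop_nhds_zero.comp h1
    have := (h2.div_const τ).neg
    simpa [neg_mul] using this
  have := integral_Ioi_of_hasDerivAt_of_tendsto hcont hderiv
    (exp_neg_integrableOn_Ioi a hτ) htend
  rw [this]; ring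

set_option maxHeartbeats 1000000 in
set_option maxHeartbeats 1000000 in
theorem cgo_paraboloid_integral (n : ℕ) (hn : 2 ≤ n) (τ K : ℝ) (hτ : 0 < τ) (hK : 0 < K)
    (v : EuclideanSpace ℝ (Fin (n - 1))) (hv : ‖v‖ = 1) :
    MeasureTheory.IntegrableOn
      (fun x : EuclideanSpace ℝ (Fin (n - 1)) × ℝ =>
        Complex.exp (Complex.I * (τ : ℂ) * ((inner ℝ v x.1 : ℝ) : ℂ) - (τ : ℂ) * (x.2 : ℂ)))
      {x : EuclideanSpace ℝ (Fin (n - 1)) × ℝ | K * ‖x.1‖ ^ 2 < x.2} volume ∧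
    ∫ x in {x : EuclideanSpace ℝ (Fin (n - 1)) × ℝ | K * ‖x.1‖ ^ 2 < x.2},
        Complex.exp (Complex.I * (τ : ℂ) * ((inner ℝ v x.1 : ℝ) : ℂ) - (τ : ℂ) * (x.2 : ℂ))
      = ((τ⁻¹ * (Real.pi / (τ * K)) ^ (((n : ℝ) - 1) / 2) * Real.exp (-τ / (4 * K)) : ℝ) : ℂ) := by
  set g : (EuclideanSpace ℝ (Fin (n - 1))) × ℝ → ℂ := fun x =>
    Complex.exp (Complex.I * (τ : ℂ) * ((inner ℝ v x.1 : ℝ) : ℂ) - (τ : ℂ) * (x.2 : ℂ)) with hg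
  set S : Set ((EuclideanSpace ℝ (Fin (n - 1))) × ℝ) := {x | K * ‖x.1‖ ^ 2 < x.2} with hSdef
  have hSopen : IsOpen S :=
    isOpen_lt (by exact (continuous_const.mul ((continuous_fst.norm).pow 2))) continuous_snd
  have hS : MeasurableSet S := hSopen.measurableSet
  have hgc : Continuous g := by
    apply Complex.continuous_exp.comp
    apply Continuous.sub
    · exact continuous_const.mul (Complex.continuous_ofReal.comp
        (Continuous.inner continuous_const continuous_fst))
    · exact continuous_const.mul (Complex.continuous_ofReal.comp continuous_snd)
  have hnorm : ∀ x : (EuclideanSpace ℝ (Fin (n - 1))) × ℝ, ‖g x‖ = Real.exp (-τ * x.2) := by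
    intro x
    simp [hg, Complex.norm_exp, Complex.sub_re, Complex.mul_re, Complex.mul_im]
  have hτK : (0:ℝ) < τ * K := mul_pos hτ hK
  have hbre : 0 < ((τ:ℂ) * (K:ℂ)).re := by
    simpa using hτK
  have hslice : ∀ x' : EuclideanSpace ℝ (Fin (n - 1)), (fun t => S.indicator g (x', t))
      = (Ioi (K * ‖x'‖ ^ 2)).indicator (fun t => g (x', t)) := by
    intro x'; funext t
    by_cases h : K * ‖x'‖ ^ 2 < t <;> simp [hSdef, Set.indicator, h, Set.mem_Ioi]
  have hsliceInt : ∀ x' : EuclideanSpace ℝ (Fin (n - 1)), Integrable (fun t => S.indicator g (x', t)) := by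
    intro x'
    rw [hslice x', integrable_indicator_iff measurableSet_Ioi]
    refine Integrable.mono' (exp_neg_integrableOn_Ioi _ hτ) ?_ ?_
    · exact ((hgc.comp (Continuous.prodMk_right x')).aestronglyMeasurable).restrict
    · filter_upwards with t
      rw [hnorm]
  have hnormint : ∀ x' : EuclideanSpace ℝ (Fin (n - 1)), ∫ t, ‖S.indicator g (x', t)‖
      = Real.exp (-(τ * K) * ‖x'‖ ^ 2) * τ⁻¹ := by
    intro x'
    have hpt : ∀ t, S.indicator g (x', t)
        = (Ioi (K * ‖x'‖ ^ 2)).indicator (fun t => g (x', t)) t :=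
      fun t => congrFun (hslice x') t
    simp_rw [hpt, norm_indicator_eq_indicator_norm]
    rw [integral_indicator measurableSet_Ioi]
    have : ∀ t : ℝ, ‖g (x', t)‖ = Real.exp (-τ * t) := fun t => hnorm (x', t)
    simp_rw [this]
    rw [exp_Ioi_int hτ]
    rw [div_eq_mul_inv]
    ring_nf
  have hgauss : Integrable (fun x' : EuclideanSpace ℝ (Fin (n - 1)) => Real.exp (-(τ * K) * ‖x'‖ ^ 2) * τ⁻¹) := by
    apply Integrable.mul_const
    have h0 := (GaussianFourier.integrable_cexp_neg_mul_sq_norm_add (V := EuclideanSpace ℝ (Fin (n - 1)))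
      hbre 0 (0 : EuclideanSpace ℝ (Fin (n - 1)))).norm
    refine h0.congr ?_
    filter_upwards with x'
    rw [Complex.norm_exp]
    congr 1
    have : (-((τ:ℂ) * (K:ℂ)) * (‖x'‖:ℂ) ^ 2 + 0 * ((inner ℝ (0:EuclideanSpace ℝ (Fin (n - 1))) x' : ℝ):ℂ))
        = ((-(τ * K) * ‖x'‖ ^ 2 : ℝ) : ℂ) := by push_cast; ring
    rw [this, Complex.ofReal_re]
  have hInd : Integrable (S.indicator g) (volume : Measure ((EuclideanSpace ℝ (Fin (n - 1))) × ℝ)) := by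
    rw [MeasureTheory.Measure.volume_eq_prod, integrable_prod_iff
      ((hgc.aestronglyMeasurable.indicator hS))]
    constructor
    · filter_upwards with x'
      exact hsliceInt x'
    · apply hgauss.congr
      filter_upwards with x'
      exact (hnormint x').symm
  have hIntOn : IntegrableOn g S := (integrable_indicator_iff hS).mp hInd
  refine ⟨hIntOn, ?_⟩
  rw [← integral_indicator hS]
  have hfub : ∫ x, S.indicator g x = ∫ x' : EuclideanSpace ℝ (Fin (n - 1)), ∫ t : ℝ, S.indicator g (x', t) := by
    rw [MeasureTheory.Measure.volume_eq_prod] at hInd ⊢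
    exact integral_prod _ hInd
  rw [hfub]
  have hinner : ∀ x' : EuclideanSpace ℝ (Fin (n - 1)), (∫ t : ℝ, S.indicator g (x', t))
      = (τ:ℂ)⁻¹ * Complex.exp (-((τ:ℂ) * (K:ℂ)) * (‖x'‖:ℂ) ^ 2
          + (Complex.I * (τ:ℂ)) * ((inner ℝ v x' : ℝ) : ℂ)) := by
    intro x'
    rw [hslice x', integral_indicator measurableSet_Ioi]
    have hpt : ∀ t : ℝ, g (x', t) = Complex.exp (Complex.I * (τ:ℂ) * ((inner ℝ v x' : ℝ):ℂ))
        * ((Real.exp (-τ * t) : ℝ) : ℂ) := by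
      intro t
      rw [hg]
      push_cast [Complex.ofReal_exp]
      rw [← Complex.exp_add]
      ring_nf
    simp_rw [hpt]
    rw [MeasureTheory.integral_const_mul]
    rw [show (∫ a in Ioi (K * ‖x'‖ ^ 2), ((Real.exp (-τ * a) : ℝ) : ℂ))
        = ((∫ a in Ioi (K * ‖x'‖ ^ 2), Real.exp (-τ * a) : ℝ) : ℂ) from integral_ofReal]
    rw [exp_Ioi_int hτ]
    rw [Complex.exp_add]
    push_cast [Complex.ofReal_exp]
    ring_nf
  simp_rw [hinner]
  rw [MeasureTheory.integral_const_mul]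
  rw [GaussianFourier.integral_cexp_neg_mul_sq_norm_add hbre (Complex.I * (τ:ℂ)) v]
  rw [hv, finrank_euclideanSpace_fin]
  have h1 : ((Complex.I * (τ:ℂ)) ^ 2 * ((1:ℝ):ℂ) ^ 2 / (4 * ((τ:ℂ) * (K:ℂ))) : ℂ)
      = ((-τ / (4 * K) : ℝ) : ℂ) := by
    rw [mul_pow, Complex.I_sq]
    push_cast
    have hτ' : (τ:ℂ) ≠ 0 := by exact_mod_cast hτ.ne'
    have hK' : (K:ℂ) ≠ 0 := by exact_mod_cast hK.ne'
    field_simp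
  have h2 : (((n - 1 : ℕ) : ℂ) / 2) = ((((n:ℝ) - 1) / 2 : ℝ) : ℂ) := by
    push_cast [Nat.cast_sub (le_trans one_le_two hn)]
    ring
  have h3 : ((π / (τ * K) : ℝ) : ℂ) = ((π:ℂ) / ((τ:ℂ) * (K:ℂ))) := by push_cast; ring
  rw [h1, ← h3, h2, ← Complex.ofReal_cpow (by positivity), ← Complex.ofReal_exp]
  push_cast
  ring
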